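/- Let Σ be an alphabet with at least two distinct elements. Let J be a finite index set and, for each j ∈ J, let u_{j,0}, u_{j,1}, u_{j,2}, u_{j,3} be words over Σ; set L := ⋃_{j∈J} {u_{j,0}} * ({u_{j,1}})* * ({u_{j,2}})* * {u_{j,3}}. Then there exists a word w over Σ that is not a prefix of any word in L. -/

import Mathlib

/-- `rep v m` is `v` repeated `m` times. -/
def rep {α : Type*} (v : List α) (m : ℕ) : List α := (List.replicate m v).flatten

lemma rep_length {α : Type*} (v : List α) (m : ℕ) : (rep v m).length = m * v.length := by
  simp [rep, List.length_flatten, List.map_replicate, List.sum_replicate, smul_eq_mul]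

lemma rep_add {α : Type*} (v : List α) (m n : ℕ) :
    rep v (m + n) = rep v m ++ rep v n := by
  show (List.replicate (m + n) v).flatten = _
  rw [List.replicate_add, List.flatten_append]
  rfl

lemma mem_kstar_singleton {α : Type*} {v x : List α}
    (hx : x ∈ KStar.kstar ({v} : Language α)) : ∃ m, x = rep v m := by
  obtain ⟨L, rfl, hL⟩ := Language.mem_kstar.1 hx
  refine ⟨L.length, ?_⟩
  have hrep : L = List.replicate L.length v :=
    List.eq_replicate_iff.2 ⟨rfl, fun y hy => hL y hy⟩
  show L.flatten = (List.replicate L.length v).flatten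
  rw [← hrep]

/-- If `X` is at least `n` long, the `n`-prefix of `X ++ Y` does not depend on `Y`. -/
lemma take_append_of_le {α : Type*} (n : ℕ) (X Y Y' : List α) (h : n ≤ X.length) :
    (X ++ Y).take n = (X ++ Y').take n := by
  simp [List.take_append, Nat.sub_eq_zero_of_le h]

lemma take_reduce {α : Type*} (n : ℕ) (u0 u1 u2 u3 : List α) (a b : ℕ) :
    ∃ a' ≤ n, ∃ b' ≤ n,
      (u0 ++ rep u1 a ++ rep u2 b ++ u3).take n
        = (u0 ++ rep u1 a' ++ rep u2 b' ++ u3).take n := by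
  -- first reduce a
  obtain ⟨a', ha'n, ha'⟩ :
      ∃ a' ≤ n, (u0 ++ rep u1 a ++ rep u2 b ++ u3).take n
        = (u0 ++ rep u1 a' ++ rep u2 b ++ u3).take n := by
    rcases le_or_gt a n with h | h
    · exact ⟨a, h, rfl⟩
    rcases List.eq_nil_or_concat u1 with h1 | h1
    · subst h1
      exact ⟨0, Nat.zero_le n, by simp [rep]⟩
    · have hlen : n ≤ (u0 ++ rep u1 n).length := by
        have h1' : 1 ≤ u1.length := by
          rcases h1 with ⟨l, x, rfl⟩; simp
        have : n ≤ n * u1.length := Nat.le_mul_of_pos_right n h1'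
        simp only [List.length_append, rep_length]
        omega
      refine ⟨n, le_refl n, ?_⟩
      have hsplit : rep u1 a = rep u1 n ++ rep u1 (a - n) := by
        rw [← rep_add]; congr 1; omega
      calc (u0 ++ rep u1 a ++ rep u2 b ++ u3).take n
          = ((u0 ++ rep u1 n) ++ (rep u1 (a-n) ++ rep u2 b ++ u3)).take n := by
            rw [hsplit]; simp [List.append_assoc]
        _ = ((u0 ++ rep u1 n) ++ (rep u2 b ++ u3)).take n :=
            take_append_of_le n _ _ _ hlen
        _ = (u0 ++ rep u1 n ++ rep u2 b ++ u3).take n := by simp [List.append_assoc]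
  -- then reduce b
  rcases le_or_gt b n with h | h
  · exact ⟨a', ha'n, b, h, ha'⟩
  rcases List.eq_nil_or_concat u2 with h2 | h2
  · subst h2
    exact ⟨a', ha'n, 0, Nat.zero_le n, by simpa [rep] using ha'⟩
  · have hlen : n ≤ (u0 ++ rep u1 a' ++ rep u2 n).length := by
      have h2' : 1 ≤ u2.length := by
        rcases h2 with ⟨l, x, rfl⟩; simp
      have : n ≤ n * u2.length := Nat.le_mul_of_pos_right n h2'
      simp only [List.length_append, rep_length]
      omega
    refine ⟨a', ha'n, n, le_refl n, ?_⟩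
    have hsplit : rep u2 b = rep u2 n ++ rep u2 (b - n) := by
      rw [← rep_add]; congr 1; omega
    rw [ha']
    calc (u0 ++ rep u1 a' ++ rep u2 b ++ u3).take n
        = ((u0 ++ rep u1 a' ++ rep u2 n) ++ (rep u2 (b-n) ++ u3)).take n := by
          rw [hsplit]; simp [List.append_assoc]
      _ = ((u0 ++ rep u1 a' ++ rep u2 n) ++ u3).take n :=
          take_append_of_le n _ _ _ hlen
      _ = (u0 ++ rep u1 a' ++ rep u2 n ++ u3).take n := by simp [List.append_assoc]

lemma exists_growth (c : ℕ) : ∃ n, c * (n + 1)^2 < 2^n := by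
  refine ⟨4 * c + 16, ?_⟩
  have hc : c < 2 ^ c := Nat.lt_two_pow_self
  have h1 : (1:ℕ) ≤ 2 ^ c := Nat.one_le_two_pow
  set x : ℕ := 2 ^ c with hx
  have hpow : (2:ℕ) ^ (4 * c + 16) = x ^ 4 * 65536 := by
    rw [hx, pow_add, mul_comm 4 c, pow_mul]
    norm_num
  rw [hpow]
  have h17 : 4 * c + 17 ≤ 21 * x := by nlinarith
  have hsq : (4 * c + 17) ^ 2 ≤ (21 * x) ^ 2 := Nat.pow_le_pow_left h17 2
  have hpos : 0 < (21 * x) ^ 2 := by positivity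
  calc c * (4 * c + 16 + 1) ^ 2 ≤ c * (21 * x) ^ 2 := Nat.mul_le_mul_left c hsq
    _ < x * (21 * x) ^ 2 := Nat.mul_lt_mul_of_pos_right hc hpos
    _ = 441 * x ^ 3 := by ring
    _ ≤ 65536 * x ^ 3 := Nat.mul_le_mul_right _ (by norm_num)
    _ ≤ 65536 * x ^ 4 := Nat.mul_le_mul_left _ (Nat.pow_le_pow_right h1 (by norm_num))
    _ = x ^ 4 * 65536 := by ring

/-- Over an alphabet with at least two letters, for any finite union
`L = ⋃_j {u_{j,0}} ({u_{j,1}})^* ({u_{j,2}})^* {u_{j,3}}`, there is a word that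
is not a prefix of any word in `L`. -/
theorem stmt_4 {α : Type*} (hα : ∃ a b : α, a ≠ b)
    (k : ℕ) (u : Fin k → Fin 4 → List α) :
    ∃ w : List α,
      ∀ x ∈ (⨆ j : Fin k,
        ({u j 0} : Language α) * KStar.kstar ({u j 1} : Language α) *
          KStar.kstar ({u j 2} : Language α) * ({u j 3} : Language α)),
        ¬ w <+: x := by
  classical
  obtain ⟨a, b, hab⟩ := hα
  obtain ⟨n, hn⟩ := exists_growth k
  -- the finite set of possible n-prefixes of words of L
  set F : Finset (List α) :=
    (Finset.univ : Finset (Fin k × Fin (n+1) × Fin (n+1))).image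
      (fun p => (u p.1 0 ++ rep (u p.1 1) p.2.1 ++ rep (u p.1 2) p.2.2 ++ u p.1 3).take n)
    with hF
  have hFcard : F.card ≤ k * (n+1)^2 := by
    calc F.card ≤ (Finset.univ : Finset (Fin k × Fin (n+1) × Fin (n+1))).card :=
          Finset.card_image_le
      _ = k * (n+1)^2 := by simp [sq, mul_assoc]
  -- the injective family of 2^n candidate words of length n
  set G : (Fin n → Bool) → List α :=
    fun v => List.ofFn (fun i => if v i then a else b) with hG
  have hGinj : Function.Injective G := by
    intro v v' h
    funext i
    have h2 := congrFun (List.ofFn_inj.1 h) i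
    by_cases hv : v i <;> by_cases hv' : v' i <;> simp_all
  set S : Finset (List α) := (Finset.univ : Finset (Fin n → Bool)).image G with hS
  have hScard : S.card = 2^n := by
    rw [hS, Finset.card_image_of_injective _ hGinj]
    simp
  -- find a candidate not in F
  have hex : ∃ w ∈ S, w ∉ F := by
    by_contra hcon
    push_neg at hcon
    have hsub : S ⊆ F := fun w hw => hcon w hw
    have := Finset.card_le_card hsub
    omega
  obtain ⟨w, hwS, hwF⟩ := hex
  have hwlen : w.length = n := by
    rw [hS] at hwS
    simp only [Finset.mem_image] at hwS
    obtain ⟨v, -, rfl⟩ := hwS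
    simp [hG]
  refine ⟨w, ?_⟩
  intro x hx hpre
  rw [Language.mem_iSup] at hx
  obtain ⟨j, hx⟩ := hx
  rw [Language.mem_mul] at hx
  obtain ⟨y, hy, z3, hz3, hyx⟩ := hx
  rw [Language.mem_mul] at hy
  obtain ⟨y', hy', z2, hz2, hy'y⟩ := hy
  rw [Language.mem_mul] at hy'
  obtain ⟨z0, hz0, z1, hz1, hz01⟩ := hy'
  replace hz0 : z0 = u j 0 := hz0; replace hz3 : z3 = u j 3 := hz3
  obtain ⟨m1, rfl⟩ := mem_kstar_singleton hz1
  obtain ⟨m2, rfl⟩ := mem_kstar_singleton hz2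
  subst hz0 hz3 hz01 hy'y hyx
  -- w is the n-prefix of x
  obtain ⟨t, ht⟩ := hpre
  have hwtake : w = (u j 0 ++ rep (u j 1) m1 ++ rep (u j 2) m2 ++ u j 3).take n := by
    rw [← ht, List.take_append, ← hwlen]
    simp
  obtain ⟨a', ha'n, b', hb'n, hred⟩ := take_reduce n (u j 0) (u j 1) (u j 2) (u j 3) m1 m2
  apply hwF
  rw [hF]
  simp only [Finset.mem_image]
  refine ⟨⟨j, ⟨a', by omega⟩, ⟨b', by omega⟩⟩, Finset.mem_univ _, ?_⟩
  rw [hwtake, hred]
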